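/- Let N ≥ 1 be an integer, σ ∈ (−N, 0), p > 0, r ≥ 1, and let α, β ∈ (0,1) satisfy rσ + Nα > 0 and rσ + Nβ < 0. Then for every measurable function f : ℝᴺ → [0,∞), ∫_{ℝᴺ} (|x|^σ f(x)^p)^r dx ≤ (Nω_N)^α (α/(rσ+Nα))^α (∫_{ℝᴺ} f(x)^{pr/(1−α)} dx)^{1−α} + (Nω_N)^β (β/(−rσ−Nβ))^β (∫_{ℝᴺ} f(x)^{pr/(1−β)} dx)^{1−β}, where both sides take values in [0,∞]. -/

import Mathlib

open MeasureTheory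

open Measure Set Metric ENNReal

variable {E : Type*} [NormedAddCommGroup E] [NormedSpace ℝ E]
    [MeasurableSpace E] [BorelSpace E] [FiniteDimensional ℝ E] [Nontrivial E]

lemma polar_lintegral (μ : Measure E) [μ.IsAddHaarMeasure] (G : ℝ → ℝ≥0∞) (hG : Measurable G) :
    ∫⁻ x, G ‖x‖ ∂μ = (Module.finrank ℝ E) * μ (ball 0 1) *
      ∫⁻ y in Ioi (0:ℝ), ENNReal.ofReal (y ^ (Module.finrank ℝ E - 1)) * G y := by
  have h0 : ∫⁻ x : ({0}ᶜ : Set E), G ‖x.1‖ ∂(μ.comap (↑)) = ∫⁻ x, G ‖x‖ ∂μ := by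
    rw [lintegral_subtype_comap (measurableSet_singleton (0:E)).compl (fun x => G ‖x‖),
      restrict_compl_singleton]
  rw [← h0]
  have h1 : ∫⁻ x : ({0}ᶜ : Set E), G ‖x.1‖ ∂(μ.comap (↑))
      = ∫⁻ p : sphere (0:E) 1 × Ioi (0:ℝ), G p.2.1
          ∂(μ.toSphere.prod (volumeIoiPow (Module.finrank ℝ E - 1))) :=
    by have := (μ.measurePreserving_homeomorphUnitSphereProd).lintegral_comp_emb
        (Homeomorph.measurableEmbedding _) (fun p => G p.2.1)
       simpa only [homeomorphUnitSphereProd_apply_snd_coe] using this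
  rw [h1]
  have hmeas : Measurable fun p : sphere (0:E) 1 × Ioi (0:ℝ) => G p.2.1 :=
    hG.comp (measurable_subtype_coe.comp measurable_snd)
  rw [lintegral_prod _ hmeas.aemeasurable]
  have hconst : ∀ x : sphere (0:E) 1, (∫⁻ y : Ioi (0:ℝ), G ((x, y).2).1
        ∂(volumeIoiPow (Module.finrank ℝ E - 1)))
      = ∫⁻ y : Ioi (0:ℝ), G y.1 ∂(volumeIoiPow (Module.finrank ℝ E - 1)) := fun _ => rfl
  rw [lintegral_congr hconst, lintegral_const, Measure.toSphere_apply_univ, Measure.volumeIoiPow,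
    lintegral_withDensity_eq_lintegral_mul _
      ((measurable_subtype_coe.pow_const _).ennreal_ofReal) (show Measurable fun y : Ioi (0:ℝ) => G y.1 from hG.comp measurable_subtype_coe)]
  have h2 : ∫⁻ y : Ioi (0:ℝ), ((fun r : Ioi (0:ℝ) => ENNReal.ofReal (r.1 ^ (Module.finrank ℝ E - 1)))
        * fun y : Ioi (0:ℝ) => G y.1) y ∂(Measure.comap Subtype.val volume)
      = ∫⁻ y in Ioi (0:ℝ), ENNReal.ofReal (y ^ (Module.finrank ℝ E - 1)) * G y := by
    exact lintegral_subtype_comap measurableSet_Ioi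
      (fun y : ℝ => ENNReal.ofReal (y ^ (Module.finrank ℝ E - 1)) * G y)
  rw [h2]
  rw [mul_comm]

lemma lintegral_rpow_ball (N : ℕ) (hN : 1 ≤ N) {t : ℝ} (ht : 0 < t + N) :
    ∫⁻ x in ball (0 : EuclideanSpace ℝ (Fin N)) 1, ENNReal.ofReal (‖x‖ ^ t) =
      (N : ℝ≥0∞) * volume (ball (0 : EuclideanSpace ℝ (Fin N)) 1)
        * ENNReal.ofReal (t + N)⁻¹ := by
  haveI : Nontrivial (EuclideanSpace ℝ (Fin N)) :=
    Module.nontrivial_of_finrank_pos (R := ℝ)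
      (by rw [finrank_euclideanSpace_fin]; omega)
  have hfin : Module.finrank ℝ (EuclideanSpace ℝ (Fin N)) = N := finrank_euclideanSpace_fin
  set G : ℝ → ℝ≥0∞ := (Iio (1:ℝ)).indicator fun y => ENNReal.ofReal (y ^ t) with hGdef
  have hG : Measurable G :=
    ((measurable_id.pow_const t).ennreal_ofReal).indicator measurableSet_Iio
  have h1 : ∫⁻ x in ball (0 : EuclideanSpace ℝ (Fin N)) 1, ENNReal.ofReal (‖x‖ ^ t)
      = ∫⁻ x : EuclideanSpace ℝ (Fin N), G ‖x‖ := by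
    rw [← lintegral_indicator measurableSet_ball]
    refine lintegral_congr fun x => ?_
    by_cases hx : ‖x‖ < 1
    · rw [Set.indicator_of_mem (mem_ball_zero_iff.2 hx), hGdef,
        Set.indicator_of_mem (by exact hx)]
    · rw [Set.indicator_of_notMem (fun h => hx (mem_ball_zero_iff.1 h)), hGdef,
        Set.indicator_of_notMem (by exact hx)]
  rw [h1, polar_lintegral volume G hG, hfin]
  congr 1
  -- compute the radial integral
  have hmul : ∀ y ∈ Ioo (0:ℝ) 1,
      ENNReal.ofReal (y ^ (N - 1)) * G y = ENNReal.ofReal (y ^ (t + N - 1)) := by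
    intro y hy
    rw [hGdef, Set.indicator_of_mem (show y ∈ Iio (1:ℝ) from hy.2),
      ← ENNReal.ofReal_mul (pow_nonneg hy.1.le _), ← Real.rpow_natCast y (N - 1),
      ← Real.rpow_add hy.1]
    congr 1
    rw [Nat.cast_sub hN, Nat.cast_one]
    ring
  have hset : ∫⁻ y in Ioi (0:ℝ), ENNReal.ofReal (y ^ (N - 1)) * G y
      = ∫⁻ y in Ioo (0:ℝ) 1, ENNReal.ofReal (y ^ (N - 1)) * G y := by
    have hind : ∀ y : ℝ, ENNReal.ofReal (y ^ (N - 1)) * G y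
        = (Iio (1:ℝ)).indicator (fun y => ENNReal.ofReal (y ^ (N - 1)) * G y) y := by
      intro y
      by_cases hy : y ∈ Iio (1:ℝ)
      · rw [Set.indicator_of_mem hy]
      · rw [Set.indicator_of_notMem hy, hGdef, Set.indicator_of_notMem hy, mul_zero]
    rw [lintegral_congr hind, lintegral_indicator measurableSet_Iio,
      Measure.restrict_restrict measurableSet_Iio, Set.Iio_inter_Ioi]
  rw [hset, setLIntegral_congr_fun measurableSet_Ioo hmul]
  have ha : (-1:ℝ) < t + N - 1 := by linarith
  have hint : IntegrableOn (fun y : ℝ => y ^ (t + (N:ℝ) - 1)) (Ioo 0 1) :=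
    (intervalIntegral.intervalIntegrable_rpow' ha).1.mono_set Set.Ioo_subset_Ioc_self
  rw [← ofReal_integral_eq_lintegral_ofReal hint ?_]
  · congr 1
    rw [← MeasureTheory.integral_Ioc_eq_integral_Ioo,
      ← intervalIntegral.integral_of_le zero_le_one,
      integral_rpow (Or.inl ha)]
    rw [Real.one_rpow, Real.zero_rpow (ne_of_gt (by linarith) : t + (N:ℝ) - 1 + 1 ≠ 0)]
    rw [show t + (N:ℝ) - 1 + 1 = t + N by ring]
    rw [sub_zero, one_div]
  · filter_upwards [ae_restrict_mem measurableSet_Ioo] with y hy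
    exact Real.rpow_nonneg hy.1.le _

lemma lintegral_rpow_ball_compl (N : ℕ) (hN : 1 ≤ N) {t : ℝ} (ht : t + N < 0) :
    ∫⁻ x in (ball (0 : EuclideanSpace ℝ (Fin N)) 1)ᶜ, ENNReal.ofReal (‖x‖ ^ t) =
      (N : ℝ≥0∞) * volume (ball (0 : EuclideanSpace ℝ (Fin N)) 1)
        * ENNReal.ofReal (-(t + N))⁻¹ := by
  haveI : Nontrivial (EuclideanSpace ℝ (Fin N)) :=
    Module.nontrivial_of_finrank_pos (R := ℝ)
      (by rw [finrank_euclideanSpace_fin]; omega)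
  have hfin : Module.finrank ℝ (EuclideanSpace ℝ (Fin N)) = N := finrank_euclideanSpace_fin
  set G : ℝ → ℝ≥0∞ := (Ici (1:ℝ)).indicator fun y => ENNReal.ofReal (y ^ t) with hGdef
  have hG : Measurable G :=
    ((measurable_id.pow_const t).ennreal_ofReal).indicator measurableSet_Ici
  have h1 : ∫⁻ x in (ball (0 : EuclideanSpace ℝ (Fin N)) 1)ᶜ, ENNReal.ofReal (‖x‖ ^ t)
      = ∫⁻ x : EuclideanSpace ℝ (Fin N), G ‖x‖ := by
    rw [← lintegral_indicator measurableSet_ball.compl]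
    refine lintegral_congr fun x => ?_
    by_cases hx : (1:ℝ) ≤ ‖x‖
    · rw [Set.indicator_of_mem, hGdef, Set.indicator_of_mem (by exact hx)]
      simp only [Set.mem_compl_iff, mem_ball_zero_iff, not_lt]
      exact hx
    · rw [Set.indicator_of_notMem, hGdef, Set.indicator_of_notMem (by exact hx)]
      simp only [Set.mem_compl_iff, mem_ball_zero_iff, not_lt, not_le] at hx ⊢
      exact hx
  rw [h1, polar_lintegral volume G hG, hfin]
  congr 1
  have hmul : ∀ y ∈ Ioi (1:ℝ),
      ENNReal.ofReal (y ^ (N - 1)) * G y = ENNReal.ofReal (y ^ (t + N - 1)) := by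
    intro y hy
    have hy0 : (0:ℝ) < y := lt_trans one_pos hy
    rw [hGdef, Set.indicator_of_mem (show y ∈ Ici (1:ℝ) from Set.mem_Ici.2 (le_of_lt hy)),
      ← ENNReal.ofReal_mul (pow_nonneg hy0.le _), ← Real.rpow_natCast y (N - 1),
      ← Real.rpow_add hy0]
    congr 1
    rw [Nat.cast_sub hN, Nat.cast_one]
    ring
  have hset : ∫⁻ y in Ioi (0:ℝ), ENNReal.ofReal (y ^ (N - 1)) * G y
      = ∫⁻ y in Ioi (1:ℝ), ENNReal.ofReal (y ^ (N - 1)) * G y := by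
    have hind : ∀ y : ℝ, ENNReal.ofReal (y ^ (N - 1)) * G y
        = (Ici (1:ℝ)).indicator (fun y => ENNReal.ofReal (y ^ (N - 1)) * G y) y := by
      intro y
      by_cases hy : y ∈ Ici (1:ℝ)
      · rw [Set.indicator_of_mem hy]
      · rw [Set.indicator_of_notMem hy, hGdef, Set.indicator_of_notMem hy, mul_zero]
    rw [lintegral_congr hind, lintegral_indicator measurableSet_Ici,
      Measure.restrict_restrict measurableSet_Ici,
      show Ici (1:ℝ) ∩ Ioi 0 = Ici 1 from
        Set.inter_eq_left.2 (fun y hy => Set.mem_Ioi.2 (lt_of_lt_of_le one_pos hy)),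
      Measure.restrict_congr_set Ioi_ae_eq_Ici.symm]
  rw [hset, setLIntegral_congr_fun measurableSet_Ioi hmul]
  have ha : t + (N:ℝ) - 1 < -1 := by linarith
  have hint : IntegrableOn (fun y : ℝ => y ^ (t + (N:ℝ) - 1)) (Ioi 1) :=
    integrableOn_Ioi_rpow_of_lt ha one_pos
  rw [← ofReal_integral_eq_lintegral_ofReal hint ?_]
  · congr 1
    rw [integral_Ioi_rpow_of_lt ha one_pos]
    rw [show t + (N:ℝ) - 1 + 1 = t + N by ring, Real.one_rpow]
    rw [neg_div, one_div, ← inv_neg]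
  · filter_upwards [ae_restrict_mem measurableSet_Ioi] with y hy
    exact Real.rpow_nonneg (le_of_lt (lt_trans one_pos hy)) _

/-- A Hölder-type estimate for the singularly weighted source term (core of
Proposition 3.3). -/
theorem weighted_holder_estimate
    (N : ℕ) (hN : 1 ≤ N) (σ p r α β : ℝ)
    (hσl : -(N : ℝ) < σ) (hσu : σ < 0) (hp : 0 < p) (hr : 1 ≤ r)
    (hα₀ : 0 < α) (hα₁ : α < 1) (hβ₀ : 0 < β) (hβ₁ : β < 1)
    (h₁ : 0 < r * σ + N * α) (h₂ : r * σ + N * β < 0)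
    (f : EuclideanSpace ℝ (Fin N) → ℝ) (hf : Measurable f) (hf₀ : ∀ x, 0 ≤ f x) :
    (∫⁻ x, ENNReal.ofReal ((‖x‖ ^ σ * f x ^ p) ^ r)) ≤
      ENNReal.ofReal
          (((N : ℝ) * (volume (Metric.ball (0 : EuclideanSpace ℝ (Fin N)) 1)).toReal) ^ α *
            (α / (r * σ + N * α)) ^ α)
        * (∫⁻ x, ENNReal.ofReal (f x ^ (p * r / (1 - α)))) ^ (1 - α)
      + ENNReal.ofReal
          (((N : ℝ) * (volume (Metric.ball (0 : EuclideanSpace ℝ (Fin N)) 1)).toReal) ^ β *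
            (β / (-(r * σ) - N * β)) ^ β)
        * (∫⁻ x, ENNReal.ofReal (f x ^ (p * r / (1 - β)))) ^ (1 - β) := by
  have h1α : 0 < 1 - α := by linarith
  have h1β : 0 < 1 - β := by linarith
  have hωtop : volume (ball (0 : EuclideanSpace ℝ (Fin N)) 1) ≠ ⊤ := measure_ball_lt_top.ne
  set ω : ℝ := (volume (ball (0 : EuclideanSpace ℝ (Fin N)) 1)).toReal with hωdef
  have hω0 : (0:ℝ) ≤ (N:ℝ) * ω := by
    have := ENNReal.toReal_nonneg (a := volume (ball (0 : EuclideanSpace ℝ (Fin N)) 1))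
    positivity
  have hNω : (N : ℝ≥0∞) * volume (ball (0 : EuclideanSpace ℝ (Fin N)) 1)
      = ENNReal.ofReal ((N:ℝ) * ω) := by
    rw [ENNReal.ofReal_mul (by positivity), ENNReal.ofReal_natCast, hωdef,
      ENNReal.ofReal_toReal hωtop]
  have hsplit : (∫⁻ x, ENNReal.ofReal ((‖x‖ ^ σ * f x ^ p) ^ r))
      = ∫⁻ x : EuclideanSpace ℝ (Fin N),
          ENNReal.ofReal (‖x‖ ^ (σ * r)) * ENNReal.ofReal (f x ^ (p * r)) := by
    refine lintegral_congr fun x => ?_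
    rw [Real.mul_rpow (Real.rpow_nonneg (norm_nonneg x) _) (Real.rpow_nonneg (hf₀ x) _),
      ← Real.rpow_mul (norm_nonneg x), ← Real.rpow_mul (hf₀ x),
      ENNReal.ofReal_mul (Real.rpow_nonneg (norm_nonneg x) _)]
  rw [hsplit, ← lintegral_add_compl
    (fun x => ENNReal.ofReal (‖x‖ ^ (σ * r)) * ENNReal.ofReal (f x ^ (p * r)))
    (measurableSet_ball : MeasurableSet (ball (0 : EuclideanSpace ℝ (Fin N)) 1))]
  refine add_le_add ?_ ?_
  · -- ball part, with exponent α
    have hconj : Real.HolderConjugate (1/α) (1/(1-α)) :=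
      Real.holderConjugate_iff.mpr ⟨one_lt_one_div hα₀ hα₁, by rw [one_div, one_div, inv_inv, inv_inv]; ring⟩
    have hH := ENNReal.lintegral_mul_le_Lp_mul_Lq
      (volume.restrict (ball (0 : EuclideanSpace ℝ (Fin N)) 1)) hconj
      ((measurable_norm.pow_const (σ*r)).ennreal_ofReal.aemeasurable)
      ((hf.pow_const (p*r)).ennreal_ofReal.aemeasurable)
    rw [one_div_one_div, one_div_one_div] at hH
    refine le_trans hH (mul_le_mul' (le_of_eq ?_) ?_)
    · have hcong : ∀ x : EuclideanSpace ℝ (Fin N),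
          (ENNReal.ofReal (‖x‖ ^ (σ * r))) ^ (1/α)
            = ENNReal.ofReal (‖x‖ ^ (σ * r / α)) := fun x => by
        rw [ENNReal.ofReal_rpow_of_nonneg (Real.rpow_nonneg (norm_nonneg x) _)
            (one_div_pos.2 hα₀).le, ← Real.rpow_mul (norm_nonneg x), mul_one_div]
      rw [lintegral_congr hcong]
      have htN : σ * r / α + N = (r * σ + N * α)/α := by field_simp
      have ht : 0 < σ * r / α + N := by rw [htN]; exact div_pos h₁ hα₀
      rw [lintegral_rpow_ball N hN ht, hNω, ← ENNReal.ofReal_mul hω0,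
        ENNReal.ofReal_rpow_of_nonneg
          (mul_nonneg hω0 (by rw [htN, inv_div]; exact div_nonneg hα₀.le h₁.le)) hα₀.le,
        Real.mul_rpow hω0 (by rw [htN, inv_div]; exact div_nonneg hα₀.le h₁.le)]
      congr 2
      rw [htN, inv_div]
    · refine ENNReal.rpow_le_rpow ?_ h1α.le
      refine le_trans (le_of_eq (lintegral_congr fun x => ?_)) (setLIntegral_le_lintegral _ _)
      rw [ENNReal.ofReal_rpow_of_nonneg (Real.rpow_nonneg (hf₀ x) _)
        (one_div_pos.2 h1α).le, ← Real.rpow_mul (hf₀ x), mul_one_div]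
  · -- complement part, with exponent β
    have hconj : Real.HolderConjugate (1/β) (1/(1-β)) :=
      Real.holderConjugate_iff.mpr ⟨one_lt_one_div hβ₀ hβ₁, by rw [one_div, one_div, inv_inv, inv_inv]; ring⟩
    have hH := ENNReal.lintegral_mul_le_Lp_mul_Lq
      (volume.restrict (ball (0 : EuclideanSpace ℝ (Fin N)) 1)ᶜ) hconj
      ((measurable_norm.pow_const (σ*r)).ennreal_ofReal.aemeasurable)
      ((hf.pow_const (p*r)).ennreal_ofReal.aemeasurable)
    rw [one_div_one_div, one_div_one_div] at hH
    refine le_trans hH (mul_le_mul' (le_of_eq ?_) ?_)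
    · have hcong : ∀ x : EuclideanSpace ℝ (Fin N),
          (ENNReal.ofReal (‖x‖ ^ (σ * r))) ^ (1/β)
            = ENNReal.ofReal (‖x‖ ^ (σ * r / β)) := fun x => by
        rw [ENNReal.ofReal_rpow_of_nonneg (Real.rpow_nonneg (norm_nonneg x) _)
            (one_div_pos.2 hβ₀).le, ← Real.rpow_mul (norm_nonneg x), mul_one_div]
      rw [lintegral_congr hcong]
      have htN : -(σ * r / β + N) = (-(r * σ) - N * β)/β := by field_simp; ring
      have ht : σ * r / β + N < 0 := by
        have : σ * r / β + N = (r * σ + N * β)/β := by field_simp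
        rw [this]; exact div_neg_of_neg_of_pos h₂ hβ₀
      have hc0 : (0:ℝ) ≤ -(σ * r / β + N)⁻¹ := by
        rw [← inv_neg, htN, inv_div]
        exact div_nonneg hβ₀.le (by linarith)
      rw [lintegral_rpow_ball_compl N hN ht, hNω]
      rw [show (-(σ * r / β + N))⁻¹ = β / (-(r * σ) - N * β) by rw [htN, inv_div]]
      rw [← ENNReal.ofReal_mul hω0,
        ENNReal.ofReal_rpow_of_nonneg
          (mul_nonneg hω0 (div_nonneg hβ₀.le (by linarith))) hβ₀.le,
        Real.mul_rpow hω0 (div_nonneg hβ₀.le (by linarith))]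
    · refine ENNReal.rpow_le_rpow ?_ h1β.le
      refine le_trans (le_of_eq (lintegral_congr fun x => ?_)) (setLIntegral_le_lintegral _ _)
      rw [ENNReal.ofReal_rpow_of_nonneg (Real.rpow_nonneg (hf₀ x) _)
        (one_div_pos.2 h1β).le, ← Real.rpow_mul (hf₀ x), mul_one_div]
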